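/- Let ψ(z) = (1/(π√(1−ρ²))) · exp(ρz/(1−ρ²)) · K₀(|z|/(1−ρ²)) for z ≠ 0, where K₀ is the modified Bessel function of the second kind and |ρ| < 1. Then ∫_ℝ ψ(z) dz = 1. -/

import Mathlib

open MeasureTheory Real

/-- The modified Bessel function of the second kind of order `0`,
`K₀(x) = ∫_0^∞ exp(−x cosh t) dt`. -/
noncomputable def besselK0 (x : ℝ) : ℝ :=
  ∫ t in Set.Ioi (0:ℝ), Real.exp (-x * Real.cosh t)

open Set Filter Topology

lemma myCosh_ge (t : ℝ) : (1 + t) / 2 ≤ Real.cosh t := by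
  have h1 := Real.add_one_le_exp t
  have h2 := (Real.exp_pos (-t)).le
  rw [Real.cosh_eq]; linarith

lemma myCosh_ge_exp (t : ℝ) : Real.exp t / 2 ≤ Real.cosh t := by
  have h2 := (Real.exp_pos (-t)).le
  rw [Real.cosh_eq]; linarith

lemma myIntegrableOn_exp_neg_mul_cosh {a : ℝ} (ha : 0 < a) :
    IntegrableOn (fun t : ℝ => Real.exp (-(a * Real.cosh t))) (Set.Ioi 0) := by
  have h : IntegrableOn (fun t : ℝ => Real.exp (-(a/2)) * Real.exp (-(a/2) * t))
      (Set.Ioi 0) := (exp_neg_integrableOn_Ioi 0 (by linarith)).const_mul _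
  refine h.mono' ?_ ?_
  · exact (Real.continuous_exp.comp
      (continuous_const.mul Real.continuous_cosh).neg).aestronglyMeasurable
  · filter_upwards [ae_restrict_mem measurableSet_Ioi] with t ht
    rw [Real.norm_eq_abs, abs_of_pos (Real.exp_pos _), ← Real.exp_add]
    apply Real.exp_le_exp.2
    have h3 := myCosh_ge t
    nlinarith

lemma myIntegrableOn_exp_neg_mul_Ioi {b : ℝ} (hb : 0 < b) :
    IntegrableOn (fun z : ℝ => Real.exp (-(b * z))) (Set.Ioi 0) := by
  simpa [neg_mul] using exp_neg_integrableOn_Ioi 0 hb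

lemma myIntegral_exp_neg_mul_Ioi {b : ℝ} (hb : 0 < b) :
    ∫ z in Set.Ioi (0:ℝ), Real.exp (-(b * z)) = 1 / b := by
  have h := integral_comp_mul_left_Ioi (fun x => Real.exp (-x)) 0 hb
  simp only [mul_zero, smul_eq_mul] at h
  rw [h, integral_exp_neg_Ioi_zero, mul_one, one_div]

lemma myIntegrableOn_exp_mul_Iic {b : ℝ} (hb : 0 < b) :
    IntegrableOn (fun z : ℝ => Real.exp (b * z)) (Set.Iic 0) := by
  have h := (Measure.measurePreserving_neg (volume : Measure ℝ)).integrableOn_comp_preimage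
      (Homeomorph.neg ℝ).measurableEmbedding
      (f := fun z : ℝ => Real.exp (b * z)) (s := Set.Iic (0:ℝ))
  rw [← h]
  have h2 : ((Neg.neg : ℝ → ℝ) ⁻¹' Set.Iic 0) = Set.Ici 0 := by ext x; simp
  have h3 : ((fun z : ℝ => Real.exp (b * z)) ∘ (Neg.neg : ℝ → ℝ))
      = fun z : ℝ => Real.exp (-(b * z)) := by
    ext x; simp [Function.comp, mul_neg]
  rw [h2, h3, integrableOn_Ici_iff_integrableOn_Ioi]
  exact myIntegrableOn_exp_neg_mul_Ioi hb

lemma myIntegral_exp_mul_Iic {b : ℝ} (hb : 0 < b) :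
    ∫ z in Set.Iic (0:ℝ), Real.exp (b * z) = 1 / b := by
  have h : ∫ x in Set.Ioi (0:ℝ), Real.exp (b * (-x)) = ∫ x in Set.Iic (-(0:ℝ)), Real.exp (b * x) :=
    integral_comp_neg_Ioi (0:ℝ) (fun z => Real.exp (b * z))
  rw [neg_zero] at h
  rw [← h]
  simp only [mul_neg]
  exact myIntegral_exp_neg_mul_Ioi hb

lemma myTendsto_sinh_atTop : Tendsto Real.sinh atTop atTop := by
  have h : Tendsto (fun x : ℝ => (Real.exp x - 1) / 2) atTop atTop := by
    have := (tendsto_atTop_add_const_right atTop (-1 : ℝ) Real.tendsto_exp_atTop).atTop_div_const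
      two_pos
    refine this.congr fun x => by ring_nf
  refine tendsto_atTop_mono' atTop ?_ h
  filter_upwards [eventually_ge_atTop (0:ℝ)] with x hx
  have h2 : Real.exp (-x) ≤ 1 := by
    calc Real.exp (-x) ≤ Real.exp 0 := Real.exp_le_exp.2 (by linarith)
    _ = 1 := Real.exp_zero
  rw [Real.sinh_eq]; linarith

/-- The density `ψ(z) = (π√(1−ρ²))⁻¹ exp(ρz/(1−ρ²)) K₀(|z|/(1−ρ²))` of the
product of two standard Gaussians with correlation `ρ ∈ (−1,1)` integrates
to `1` over `ℝ`. -/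
theorem integral_product_gaussian_density_eq_one
    (ρ : ℝ) (hρ₁ : -1 < ρ) (hρ₂ : ρ < 1) :
    ∫ z : ℝ,
        (1 / (π * Real.sqrt (1 - ρ ^ 2))) *
          Real.exp (ρ * z / (1 - ρ ^ 2)) * besselK0 (|z| / (1 - ρ ^ 2)) = 1 := by
  have hs : 0 < 1 - ρ ^ 2 := by nlinarith
  set s : ℝ := 1 - ρ ^ 2 with hs_def
  set c : ℝ := Real.sqrt s with hc_def
  have hc : 0 < c := Real.sqrt_pos.2 hs
  have hc2 : c ^ 2 = s := Real.sq_sqrt hs.le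
  set C : ℝ := 1 / (π * c) with hC_def
  have hπ : 0 < π := Real.pi_pos
  have hC : 0 < C := by rw [hC_def]; positivity
  set F : ℝ → ℝ → ℝ := fun z t => C * Real.exp ((ρ * z - |z| * Real.cosh t) / s) with hF_def
  set g : ℝ → ℝ := fun t => 2 * C * s * Real.cosh t / (Real.cosh t ^ 2 - ρ ^ 2) with hg_def
  have hden_pos : ∀ t : ℝ, 0 < Real.cosh t ^ 2 - ρ ^ 2 := fun t => by
    have := Real.one_le_cosh t; nlinarith
  -- Step A : the density equals an integral of F
  have hψF : ∀ z : ℝ, C * Real.exp (ρ * z / s) * besselK0 (|z| / s)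
      = ∫ t in Set.Ioi (0:ℝ), F z t := by
    intro z
    rw [besselK0, ← MeasureTheory.integral_const_mul]
    refine integral_congr_ae (Filter.Eventually.of_forall fun t => ?_)
    rw [hF_def]
    simp only
    rw [mul_assoc, ← Real.exp_add]
    congr 1
    ring
  -- Bochner integrability in t for z ≠ 0
  have hIntT : ∀ z : ℝ, z ≠ 0 → IntegrableOn (fun t => F z t) (Set.Ioi 0) := by
    intro z hz
    have h : IntegrableOn (fun t : ℝ => (C * Real.exp (ρ * z / s)) *
        Real.exp (-(|z| / s * Real.cosh t))) (Set.Ioi 0) :=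
      (myIntegrableOn_exp_neg_mul_cosh
        (div_pos (abs_pos.2 hz) hs)).const_mul (C * Real.exp (ρ * z / s))
    refine h.congr_fun (fun t _ => ?_) measurableSet_Ioi
    beta_reduce
    rw [mul_assoc, ← Real.exp_add, hF_def]
    simp only
    congr 1
    ring
  -- Step D : integrability in z and value of the z-integral, for every t
  have hIntZ : ∀ t : ℝ, Integrable (fun z => F z t) := by
    intro t
    have hu := Real.one_le_cosh t
    have h1 : 0 < (Real.cosh t - ρ) / s := div_pos (by linarith) hs
    have h2 : 0 < (Real.cosh t + ρ) / s := div_pos (by linarith) hs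
    rw [← integrableOn_univ, ← Set.Iic_union_Ioi (a := (0:ℝ)), integrableOn_union]
    constructor
    · have hL : IntegrableOn (fun z : ℝ => C * Real.exp ((Real.cosh t + ρ) / s * z))
          (Set.Iic 0) := (myIntegrableOn_exp_mul_Iic h2).const_mul C
      refine hL.congr_fun (fun z hz => ?_) measurableSet_Iic
      rw [hF_def]
      simp only
      rw [abs_of_nonpos hz]
      congr 1
      ring
    · have hR : IntegrableOn (fun z : ℝ => C * Real.exp (-((Real.cosh t - ρ) / s * z)))
          (Set.Ioi 0) := (myIntegrableOn_exp_neg_mul_Ioi h1).const_mul C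
      refine hR.congr_fun (fun z hz => ?_) measurableSet_Ioi
      rw [hF_def]
      simp only
      rw [abs_of_pos hz]
      congr 1
      ring
  have hIntVal : ∀ t : ℝ, ∫ z, F z t = g t := by
    intro t
    have hu := Real.one_le_cosh t
    have h1 : 0 < (Real.cosh t - ρ) / s := div_pos (by linarith) hs
    have h2 : 0 < (Real.cosh t + ρ) / s := div_pos (by linarith) hs
    have hL : IntegrableOn (fun z => F z t) (Set.Iic 0) := (hIntZ t).integrableOn
    have hR : IntegrableOn (fun z => F z t) (Set.Ioi 0) := (hIntZ t).integrableOn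
    rw [← intervalIntegral.integral_Iic_add_Ioi hL hR]
    have e1 : ∫ z in Set.Iic (0:ℝ), F z t
        = C * (1 / ((Real.cosh t + ρ) / s)) := by
      rw [setIntegral_congr_fun measurableSet_Iic
        (g := fun z => C * Real.exp ((Real.cosh t + ρ) / s * z)) (fun z hz => by
          rw [hF_def]; simp only
          rw [abs_of_nonpos hz]; congr 1; ring),
        MeasureTheory.integral_const_mul, myIntegral_exp_mul_Iic h2]
    have e2 : ∫ z in Set.Ioi (0:ℝ), F z t
        = C * (1 / ((Real.cosh t - ρ) / s)) := by
      rw [setIntegral_congr_fun measurableSet_Ioi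
        (g := fun z => C * Real.exp (-((Real.cosh t - ρ) / s * z))) (fun z hz => by
          rw [hF_def]; simp only
          rw [abs_of_pos hz]; congr 1; ring),
        MeasureTheory.integral_const_mul, myIntegral_exp_neg_mul_Ioi h1]
    rw [e1, e2, hg_def]
    have hne1 : Real.cosh t - ρ ≠ 0 := by linarith
    have hne2 : Real.cosh t + ρ ≠ 0 := by linarith
    have hne3 : Real.cosh t ^ 2 - ρ ^ 2 ≠ 0 := (hden_pos t).ne'
    field_simp
    ring
  -- Step E : the outer integral
  have hg_nonneg : ∀ t : ℝ, 0 ≤ g t := fun t => by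
    rw [hg_def]
    have := (hden_pos t).le
    have := (Real.cosh_pos (x := t)).le
    positivity
  have hg_cont : Continuous g := by
    rw [hg_def]
    exact ((continuous_const.mul Real.continuous_cosh).div
      ((Real.continuous_cosh.pow 2).sub continuous_const) fun t => (hden_pos t).ne')
  have hg_int : IntegrableOn g (Set.Ioi 0) := by
    refine (((exp_neg_integrableOn_Ioi 0 one_pos).const_mul (4 * C)).mono'
      hg_cont.aestronglyMeasurable.restrict ?_)
    filter_upwards [ae_restrict_mem measurableSet_Ioi] with t ht
    have hu := Real.one_le_cosh t
    have hcosh := Real.cosh_pos (x := t)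
    have hexp := myCosh_ge_exp t
    have hden := hden_pos t
    rw [Real.norm_eq_abs, abs_of_nonneg (hg_nonneg t)]
    have key : g t ≤ 2 * C / Real.cosh t := by
      rw [hg_def]
      simp only
      rw [div_le_div_iff₀ hden hcosh]
      have hsc : s * Real.cosh t ^ 2 ≤ Real.cosh t ^ 2 - ρ ^ 2 := by
        rw [hs_def]
        have h1 : (1:ℝ) ≤ Real.cosh t ^ 2 := by nlinarith
        nlinarith [mul_nonneg (sq_nonneg ρ) (sub_nonneg.2 h1)]
      nlinarith [mul_pos hC hcosh, sq_nonneg (Real.cosh t)]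
    have key2 : 2 * C / Real.cosh t ≤ 4 * C * Real.exp (-1 * t) := by
      have hexp_pos := Real.exp_pos t
      rw [div_le_iff₀ hcosh, neg_one_mul, Real.exp_neg]
      rw [show 4 * C * (Real.exp t)⁻¹ * Real.cosh t
          = 4 * C * (Real.cosh t / Real.exp t) by ring]
      have h5 : 1 / 2 ≤ Real.cosh t / Real.exp t := by
        rw [le_div_iff₀ hexp_pos]; linarith
      nlinarith
    linarith
  have hg_val : ∫ t in Set.Ioi (0:ℝ), g t = 1 := by
    have hG : ∀ x ∈ Set.Ici (0:ℝ), HasDerivAt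
        (fun t => (2 * C * s / c) * Real.arctan (Real.sinh t / c)) (g x) x := by
      intro x _
      have h1 : HasDerivAt (fun t : ℝ => Real.sinh t / c) (Real.cosh x / c) x :=
        (Real.hasDerivAt_sinh x).div_const c
      have h2 := (h1.arctan).const_mul (2 * C * s / c)
      refine h2.congr_deriv ?_
      symm
      rw [hg_def]
      simp only
      have hsq : Real.sinh x ^ 2 = Real.cosh x ^ 2 - 1 := by
        have := Real.cosh_sq_sub_sinh_sq x; linarith
      have hden := (hden_pos x).ne'
      have hcne : c ≠ 0 := hc.ne'
      have hc2' : c ^ 2 = 1 - ρ ^ 2 := by rw [hc2, hs_def]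
      field_simp
      linear_combination hc2' + hsq
    have hTnd : Tendsto (fun t => (2 * C * s / c) * Real.arctan (Real.sinh t / c)) atTop
        (𝓝 ((2 * C * s / c) * (π / 2))) := by
      refine Tendsto.const_mul _ ?_
      have h1 : Tendsto (fun t => Real.sinh t / c) atTop atTop :=
        myTendsto_sinh_atTop.atTop_div_const hc
      exact (tendsto_nhds_of_tendsto_nhdsWithin Real.tendsto_arctan_atTop).comp h1
    have := integral_Ioi_of_hasDerivAt_of_tendsto' hG hg_int hTnd
    rw [this]
    simp only [Real.sinh_zero, zero_div, Real.arctan_zero, mul_zero, sub_zero]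
    rw [hC_def]
    have : s = c ^ 2 := hc2.symm
    rw [this]
    field_simp
  -- Measurability
  have hFm : Continuous (fun p : ℝ × ℝ => F p.1 p.2) := by
    rw [hF_def]
    refine continuous_const.mul (Real.continuous_exp.comp ?_)
    exact ((continuous_const.mul continuous_fst).sub
      ((continuous_fst.abs).mul (Real.continuous_cosh.comp continuous_snd))).div_const s
  have hψ_meas : AEStronglyMeasurable
      (fun z => C * Real.exp (ρ * z / s) * besselK0 (|z| / s)) volume := by
    have hf : StronglyMeasurable (fun p : ℝ × ℝ => Real.exp (-(|p.1| / s) * Real.cosh p.2)) :=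
      (Real.continuous_exp.comp
        (((continuous_fst.abs.div_const s).neg).mul
          (Real.continuous_cosh.comp continuous_snd))).stronglyMeasurable
    have h := hf.integral_prod_right' (ν := volume.restrict (Set.Ioi 0))
    exact ((continuous_const.mul (Real.continuous_exp.comp
      ((continuous_const.mul continuous_id).div_const s))).aestronglyMeasurable).mul
      h.aestronglyMeasurable
  have hψ_nonneg : ∀ z : ℝ, 0 ≤ C * Real.exp (ρ * z / s) * besselK0 (|z| / s) := by
    intro z
    refine mul_nonneg (mul_nonneg hC.le (Real.exp_pos _).le) ?_
    exact integral_nonneg fun t => (Real.exp_pos _).le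
  -- main computation via lintegrals
  have key : ∫⁻ z : ℝ, ENNReal.ofReal (C * Real.exp (ρ * z / s) * besselK0 (|z| / s)) = 1 := by
    have hz0 : ∀ᵐ z : ℝ ∂volume, z ≠ 0 := by
      rw [ae_iff]
      have h0 : {z : ℝ | ¬ z ≠ 0} = {0} := by ext x; simp
      rw [h0]
      exact measure_singleton 0
    calc ∫⁻ z : ℝ, ENNReal.ofReal (C * Real.exp (ρ * z / s) * besselK0 (|z| / s))
        = ∫⁻ z : ℝ, ∫⁻ t in Set.Ioi (0:ℝ), ENNReal.ofReal (F z t) := by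
          refine lintegral_congr_ae ?_
          filter_upwards [hz0] with z hz
          rw [hψF z, ofReal_integral_eq_lintegral_ofReal (hIntT z hz)
            (Filter.Eventually.of_forall fun t => by
              rw [hF_def]; positivity)]
      _ = ∫⁻ t in Set.Ioi (0:ℝ), ∫⁻ z : ℝ, ENNReal.ofReal (F z t) := by
          refine lintegral_lintegral_swap ?_
          exact (hFm.measurable.ennreal_ofReal).aemeasurable
      _ = ∫⁻ t in Set.Ioi (0:ℝ), ENNReal.ofReal (g t) := by
          refine lintegral_congr fun t => ?_
          rw [← hIntVal t]
          exact (ofReal_integral_eq_lintegral_ofReal (hIntZ t)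
            (Filter.Eventually.of_forall fun z => by rw [hF_def]; positivity)).symm
      _ = ENNReal.ofReal 1 := by
          rw [← hg_val]
          exact (ofReal_integral_eq_lintegral_ofReal hg_int
            (Filter.Eventually.of_forall fun t => hg_nonneg t)).symm
      _ = 1 := ENNReal.ofReal_one
  rw [integral_eq_lintegral_of_nonneg_ae
    (Filter.Eventually.of_forall hψ_nonneg) hψ_meas, key, ENNReal.toReal_one]
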